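/- For 1 ≤ m < n, let S₁ = {a, t, t⁻¹} in BS(m,n) = ⟨a, t ∣ t aᵐ t⁻¹ = aⁿ⟩. Then an element g of BS(m,n) lies in the submonoid generated by S₁ if and only if the irreducible normal form of g with respect to the complete rewriting system {aA→1, Aa→1, tT→1, Tt→1, aⁿt→taᵐ, At→aⁿ⁻¹tAᵐ, aᵐT→Taⁿ, AT→aᵐ⁻¹TAⁿ} is a word over {a, t, T} only (contains no occurrence of A). -/

import Mathlib

/-- Defining relator of `BS(m,n) = ⟨a, t ∣ t aᵐ t⁻¹ = aⁿ⟩`, with `a = of 0`, `t = of 1`. -/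
def bsRel (m n : ℕ) : Set (FreeGroup (Fin 2)) :=
  {FreeGroup.of 1 * FreeGroup.of 0 ^ m * (FreeGroup.of 1)⁻¹ * (FreeGroup.of 0 ^ n)⁻¹}

/-- The rewriting rules over the alphabet `Fin 4` where `0 = a`, `1 = A = a⁻¹`,
`2 = t`, `3 = T = t⁻¹`. -/
def bsRules (m n : ℕ) : Set (List (Fin 4) × List (Fin 4)) :=
  { ([0, 1], []), ([1, 0], []), ([2, 3], []), ([3, 2], []),
    (List.replicate n 0 ++ [2], 2 :: List.replicate m 0),
    ([1, 2], List.replicate (n - 1) 0 ++ 2 :: List.replicate m 1),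
    (List.replicate m 0 ++ [3], 3 :: List.replicate n 0),
    ([1, 3], List.replicate (m - 1) 0 ++ 3 :: List.replicate n 1) }

/-- One-step rewriting relation generated by the rules. -/
def bsRw (m n : ℕ) (w₁ w₂ : List (Fin 4)) : Prop :=
  ∃ l r u v, (u, v) ∈ bsRules m n ∧ w₁ = l ++ u ++ r ∧ w₂ = l ++ v ++ r

/-- Evaluation of a word over `{a, A, t, T}` in `BS(m,n)`. -/
def bsEval (m n : ℕ) (w : List (Fin 4)) : PresentedGroup (bsRel m n) :=
  (w.map (fun i =>
    if i = 0 then PresentedGroup.of 0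
    else if i = 1 then (PresentedGroup.of 0)⁻¹
    else if i = 2 then PresentedGroup.of 1
    else (PresentedGroup.of 1)⁻¹)).prod



open Subgroup Multiplicative

section phi
lemma zpow_ofAdd (m k : ℤ) : (ofAdd m) ^ k = ofAdd (m * k) := by
  rw [← ofAdd_zsmul, smul_eq_mul, mul_comm]

lemma mem_zpowers_ofAdd_iff' (m : ℤ) (x : Multiplicative ℤ) :
    x ∈ zpowers (ofAdd m) ↔ m ∣ x.toAdd := by
  rw [Subgroup.mem_zpowers_iff]
  constructor
  · rintro ⟨k, hk⟩
    exact ⟨k, by rw [← hk, zpow_ofAdd]; simp [mul_comm]⟩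
  · rintro ⟨k, hk⟩
    exact ⟨k, by rw [zpow_ofAdd, ← hk]; simp⟩

def expDiv (m : ℤ) : (zpowers (ofAdd m) : Subgroup (Multiplicative ℤ)) →* Multiplicative ℤ where
  toFun x := ofAdd ((Multiplicative.toAdd (x : Multiplicative ℤ)) / m)
  map_one' := by simp
  map_mul' x y := by
    have hx : m ∣ (Multiplicative.toAdd (x : Multiplicative ℤ)) :=
      (mem_zpowers_ofAdd_iff' m _).1 x.2
    simp only [Subgroup.coe_mul, toAdd_mul, ← ofAdd_add]
    congr 1
    exact Int.add_ediv_of_dvd_left hx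

def expMul (n : ℤ) : Multiplicative ℤ →* (zpowers (ofAdd n) : Subgroup (Multiplicative ℤ)) where
  toFun x := ⟨ofAdd (n * x.toAdd), (mem_zpowers_ofAdd_iff' n _).2 (Dvd.intro _ rfl)⟩
  map_one' := by ext; simp
  map_mul' x y := by ext; simp [mul_add]

def bsφ (m n : ℤ) (hm : m ≠ 0) (hn : n ≠ 0) :
    (zpowers (ofAdd m) : Subgroup (Multiplicative ℤ)) ≃*
      (zpowers (ofAdd n) : Subgroup (Multiplicative ℤ)) where
  toFun := (expMul n).comp (expDiv m)
  invFun := (expMul m).comp (expDiv n)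
  left_inv x := by
    obtain ⟨k, hk⟩ := (mem_zpowers_ofAdd_iff' m _).1 x.2
    ext
    simp only [MonoidHom.comp_apply, expMul, expDiv, MonoidHom.coe_mk, OneHom.coe_mk, hk,
      toAdd_ofAdd]
    rw [Int.mul_ediv_cancel_left _ hm, Int.mul_ediv_cancel_left _ hn, ← hk]
  right_inv x := by
    obtain ⟨k, hk⟩ := (mem_zpowers_ofAdd_iff' n _).1 x.2
    ext
    simp only [MonoidHom.comp_apply, expMul, expDiv, MonoidHom.coe_mk, OneHom.coe_mk, hk,
      toAdd_ofAdd]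
    rw [Int.mul_ediv_cancel_left _ hn, Int.mul_ediv_cancel_left _ hm, ← hk]
  map_mul' x y := map_mul _ x y

lemma bsφ_apply (m n : ℤ) (hm : m ≠ 0) (hn : n ≠ 0) (k : ℤ)
    (h : ofAdd (m * k) ∈ zpowers (ofAdd m)) :
    (bsφ m n hm hn ⟨ofAdd (m * k), h⟩ : Multiplicative ℤ) = ofAdd (n * k) := by
  show ((expMul n).comp (expDiv m) _ : Multiplicative ℤ) = _
  simp only [MonoidHom.comp_apply, expMul, expDiv, MonoidHom.coe_mk, OneHom.coe_mk]
  simp only [toAdd_ofAdd]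
  rw [Int.mul_ediv_cancel_left _ hm]
end phi

namespace Stmt8

variable (m n : ℕ) (hm : 0 < m) (hn : 0 < n)

lemma castne (hm : 0 < m) : (m : ℤ) ≠ 0 := by exact_mod_cast hm.ne'

/-- the subgroup iso for BS(m,n) -/
def φmn : (zpowers (ofAdd (m:ℤ)) : Subgroup (Multiplicative ℤ)) ≃*
    (zpowers (ofAdd (n:ℤ)) : Subgroup (Multiplicative ℤ)) :=
  bsφ m n (castne m hm) (castne n hn)

/-- The HNN extension model of BS(m,n). -/
abbrev H := HNNExtension (Multiplicative ℤ) _ _ (φmn m n hm hn)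

open HNNExtension

/-- the `a` of the HNN model -/
def ha : H m n hm hn := of (ofAdd (1:ℤ))

/-- the `t` of the HNN model -/
def ht : H m n hm hn := t

lemma ha_pow (c : ℕ) : (of (ofAdd (c:ℤ)) : H m n hm hn) = (ha m n hm hn) ^ c := by
  rw [ha, ← map_pow]
  congr 1
  rw [← ofAdd_nsmul]
  simp

/-- key relation: `t * a^(m*k) = a^(n*k) * t` in `H`. -/
lemma t_mul_pow (k : ℕ) :
    (ht m n hm hn) * of (ofAdd ((m*k : ℕ):ℤ)) = of (ofAdd ((n*k : ℕ):ℤ)) * ht m n hm hn := by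
  have h : ofAdd ((m:ℤ) * (k:ℤ)) ∈ zpowers (ofAdd (m:ℤ)) :=
    (mem_zpowers_ofAdd_iff' _ _).2 (by simp [Dvd.intro])
  have := t_mul_of (φ := φmn m n hm hn) ⟨ofAdd ((m:ℤ)*(k:ℤ)), h⟩
  rw [φmn, bsφ_apply] at this
  simp [ht, Int.natCast_mul] at this ⊢; exact this

lemma inv_t_mul_pow (k : ℕ) :
    (ht m n hm hn)⁻¹ * of (ofAdd ((n*k : ℕ):ℤ)) = of (ofAdd ((m*k : ℕ):ℤ)) * (ht m n hm hn)⁻¹ := by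
  have h : ofAdd ((n:ℤ) * (k:ℤ)) ∈ zpowers (ofAdd (n:ℤ)) :=
    (mem_zpowers_ofAdd_iff' _ _).2 (by simp [Dvd.intro])
  have := inv_t_mul_of (φ := φmn m n hm hn) ⟨ofAdd ((n:ℤ)*(k:ℤ)), h⟩
  have h2 : ((φmn m n hm hn).symm ⟨ofAdd ((n:ℤ)*(k:ℤ)), h⟩ : Multiplicative ℤ)
      = ofAdd ((m:ℤ)*(k:ℤ)) := by
    have h3 : ofAdd ((m:ℤ) * (k:ℤ)) ∈ zpowers (ofAdd (m:ℤ)) :=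
      (mem_zpowers_ofAdd_iff' _ _).2 (by simp [Dvd.intro])
    have : φmn m n hm hn ⟨ofAdd ((m:ℤ)*(k:ℤ)), h3⟩ = ⟨ofAdd ((n:ℤ)*(k:ℤ)), h⟩ := by
      ext
      rw [φmn, bsφ_apply]
    rw [← this, MulEquiv.symm_apply_apply]
  rw [h2] at this
  simpa [ht, Int.natCast_mul] using this

/-- letter evaluation in H -/
def genH : Fin 4 → H m n hm hn := fun i =>
  if i = 0 then ha m n hm hn
  else if i = 1 then (ha m n hm hn)⁻¹
  else if i = 2 then ht m n hm hn
  else (ht m n hm hn)⁻¹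

/-- word evaluation in H -/
def hEval (w : List (Fin 4)) : H m n hm hn := (w.map (genH m n hm hn)).prod

lemma hEval_append (u v : List (Fin 4)) :
    hEval m n hm hn (u ++ v) = hEval m n hm hn u * hEval m n hm hn v := by
  simp [hEval]

lemma hEval_cons (x : Fin 4) (v : List (Fin 4)) :
    hEval m n hm hn (x :: v) = genH m n hm hn x * hEval m n hm hn v := by
  simp [hEval]

lemma hEval_replicate (c : ℕ) :
    hEval m n hm hn (List.replicate c 0) = of (ofAdd (c:ℤ)) := by
  rw [ha_pow]
  induction c with
  | zero => simp [hEval]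
  | succ c ih =>
    rw [List.replicate_succ, hEval_cons, ih, pow_succ]
    simp [genH]
    rw [← pow_succ', pow_succ]

end Stmt8

namespace Stmt8
open HNNExtension HNNExtension.NormalWord
variable (m n : ℕ) (hm : 0 < m) (hn : 0 < n)

/-- `a^c * t = a^(c % n) * t * a^(m * (c/n))` in `H`. -/
lemma pow_mul_t (c : ℕ) :
    (of (ofAdd (c:ℤ)) : H m n hm hn) * ht m n hm hn
      = of (ofAdd ((c % n : ℕ):ℤ)) * ht m n hm hn * of (ofAdd ((m * (c / n) : ℕ):ℤ)) := by
  have hc : (c:ℤ) = ((c % n : ℕ):ℤ) + ((n * (c / n) : ℕ):ℤ) := by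
    rw [← Nat.cast_add, Nat.mod_add_div]
  rw [hc, ofAdd_add, map_mul, mul_assoc, ← t_mul_pow, ← mul_assoc]

/-- `a^c * t⁻¹ = a^(c % m) * t⁻¹ * a^(n * (c/m))` in `H`. -/
lemma pow_mul_tinv (c : ℕ) :
    (of (ofAdd (c:ℤ)) : H m n hm hn) * (ht m n hm hn)⁻¹
      = of (ofAdd ((c % m : ℕ):ℤ)) * (ht m n hm hn)⁻¹ * of (ofAdd ((n * (c / m) : ℕ):ℤ)) := by
  have hc : (c:ℤ) = ((c % m : ℕ):ℤ) + ((m * (c / m) : ℕ):ℤ) := by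
    rw [← Nat.cast_add, Nat.mod_add_div]
  rw [hc, ofAdd_add, map_mul, mul_assoc, ← inv_t_mul_pow, ← mul_assoc]

/-- the bound on the `a`-block before a `t^u` -/
def bound (u : ℤˣ) : ℕ := if u = 1 then n else m

/-- the chain relation between consecutive blocks -/
def Rel (p q : ℤˣ × ℕ) : Prop := p.2 < bound m n q.1 ∧ (p.2 = 0 → p.1 = q.1)

/-- validity of a block decomposition -/
def valid (c : ℕ) (l : List (ℤˣ × ℕ)) : Prop :=
  (∀ p ∈ l.head?, c < bound m n p.1) ∧ l.Chain' (Rel m n)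

lemma valid_nil (c : ℕ) : valid m n c [] := ⟨by simp, List.isChain_nil⟩

lemma valid_tail {c : ℕ} {u : ℤˣ} {d : ℕ} {l : List (ℤˣ × ℕ)}
    (h : valid m n c ((u, d) :: l)) : valid m n d l := by
  obtain ⟨-, hch⟩ := h
  unfold List.Chain' at hch
  rw [List.isChain_cons] at hch
  exact ⟨fun p hp => (hch.1 p hp).1, hch.2⟩

/-- the word of a block decomposition -/
def wordOf : ℕ → List (ℤˣ × ℕ) → List (Fin 4)
  | c, [] => List.replicate c 0
  | c, (u, d) :: l => List.replicate c 0 ++ ((if u = 1 then (2:Fin 4) else 3) :: wordOf d l)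

/-- the `H`-product of a block decomposition -/
def rprod (c : ℕ) (l : List (ℤˣ × ℕ)) : H m n hm hn :=
  of (ofAdd (c:ℤ)) * (l.map (fun p => (t:H m n hm hn) ^ ((p.1 : ℤˣ) : ℤ)
    * of (ofAdd ((p.2:ℕ):ℤ)))).prod

lemma rprod_nil (c : ℕ) : rprod m n hm hn c [] = of (ofAdd (c:ℤ)) := by
  simp [rprod]

lemma rprod_cons (c : ℕ) (u : ℤˣ) (d : ℕ) (l : List (ℤˣ × ℕ)) :
    rprod m n hm hn c ((u, d) :: l)
      = of (ofAdd (c:ℤ)) * (t:H m n hm hn) ^ ((u : ℤˣ) : ℤ) * rprod m n hm hn d l := by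
  simp [rprod, mul_assoc]

lemma genH_t_or (u : ℤˣ) :
    genH m n hm hn (if u = 1 then (2:Fin 4) else 3) = (t:H m n hm hn) ^ ((u : ℤˣ) : ℤ) := by
  rcases Int.units_eq_one_or u with rfl | rfl
  · show genH m n hm hn 2 = t ^ ((1:ℤˣ):ℤ)
    show ht m n hm hn = _
    rw [ht]
    norm_num
  · show genH m n hm hn 3 = t ^ (((-1:ℤˣ)):ℤ)
    show (ht m n hm hn)⁻¹ = _
    rw [ht]
    norm_num

lemma hEval_wordOf (c : ℕ) (l : List (ℤˣ × ℕ)) :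
    hEval m n hm hn (wordOf c l) = rprod m n hm hn c l := by
  induction l generalizing c with
  | nil => rw [wordOf, rprod_nil, hEval_replicate]
  | cons p l ih =>
    obtain ⟨u, d⟩ := p
    rw [wordOf, hEval_append, hEval_cons, hEval_replicate, ih, rprod_cons, genH_t_or, mul_assoc]

/-- The reduced word associated to a valid block decomposition. -/
def toRW (c : ℕ) (l : List (ℤˣ × ℕ)) (h : valid m n c l) :
    ReducedWord (Multiplicative ℤ) (zpowers (ofAdd (m:ℤ))) (zpowers (ofAdd (n:ℤ))) where
  head := ofAdd (c:ℤ)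
  toList := l.map (fun p => (p.1, ofAdd ((p.2:ℕ):ℤ)))
  chain := by
    rw [List.isChain_map]
    refine List.IsChain.imp ?_ h.2
    rintro ⟨u, d⟩ ⟨u', d'⟩ ⟨h1, h2⟩ hmem
    rcases Int.units_eq_one_or u with rfl | rfl
    · rw [toSubgroup_one] at hmem
      have hdvd : (m:ℤ) ∣ (d:ℤ) := (mem_zpowers_ofAdd_iff' _ _).1 hmem
      by_contra hne
      have hb : bound m n u' = m := by
        rcases Int.units_eq_one_or u' with rfl | rfl
        · simp at hne
        · simp [bound]
      rw [hb] at h1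
      have : (d:ℤ) = 0 := Int.eq_zero_of_abs_lt_dvd hdvd (by
        rw [abs_of_nonneg (by positivity)]
        exact_mod_cast h1)
      exact hne (h2 (by exact_mod_cast this))
    · rw [toSubgroup_neg_one] at hmem
      have hdvd : (n:ℤ) ∣ (d:ℤ) := (mem_zpowers_ofAdd_iff' _ _).1 hmem
      by_contra hne
      have hb : bound m n u' = n := by
        rcases Int.units_eq_one_or u' with rfl | rfl
        · simp [bound]
        · simp at hne
      rw [hb] at h1
      have : (d:ℤ) = 0 := Int.eq_zero_of_abs_lt_dvd hdvd (by
        rw [abs_of_nonneg (by positivity)]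
        exact_mod_cast h1)
      exact hne (h2 (by exact_mod_cast this))

lemma toRW_prod (c : ℕ) (l : List (ℤˣ × ℕ)) (h : valid m n c l) :
    (toRW m n c l h).prod (φmn m n hm hn) = rprod m n hm hn c l := by
  rw [ReducedWord.prod, toRW, rprod]
  simp [List.map_map, Function.comp_def]

lemma toRW_toList (c : ℕ) (l : List (ℤˣ × ℕ)) (h : valid m n c l) :
    (toRW m n c l h).toList = l.map (fun p => (p.1, ofAdd ((p.2:ℕ):ℤ))) := rfl

lemma toRW_head (c : ℕ) (l : List (ℤˣ × ℕ)) (h : valid m n c l) :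
    (toRW m n c l h).head = ofAdd (c:ℤ) := rfl

lemma toRW_map_fst (c : ℕ) (l : List (ℤˣ × ℕ)) (h : valid m n c l) :
    (toRW m n c l h).toList.map Prod.fst = l.map Prod.fst := by
  rw [toRW_toList, List.map_map]
  rfl

/-- Injectivity of `rprod` on valid block decompositions; this is the key application of
Britton's lemma. -/
theorem rprod_inj : ∀ (l₁ : List (ℤˣ × ℕ)) (c₁ : ℕ) (l₂ : List (ℤˣ × ℕ)) (c₂ : ℕ),
    valid m n c₁ l₁ → valid m n c₂ l₂ →
    rprod m n hm hn c₁ l₁ = rprod m n hm hn c₂ l₂ → c₁ = c₂ ∧ l₁ = l₂ := by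
  intro l₁
  induction l₁ with
  | nil =>
    intro c₁ l₂ c₂ h₁ h₂ heq
    have hBritton := ReducedWord.map_fst_eq_and_of_prod_eq (φmn m n hm hn)
      (w₁ := toRW m n c₁ [] h₁) (w₂ := toRW m n c₂ l₂ h₂)
      (by rw [toRW_prod, toRW_prod]; exact heq)
    have hl₂ : l₂ = [] := by
      have h5 := hBritton.1
      rw [toRW_map_fst, toRW_map_fst] at h5
      simpa using (List.map_eq_nil_iff.1 h5.symm)
    subst hl₂
    rw [rprod_nil, rprod_nil] at heq
    have h6 := HNNExtension.of_injective (φmn m n hm hn) heq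
    exact ⟨by exact_mod_cast ofAdd.injective h6, rfl⟩
  | cons p l₁' ih =>
    intro c₁ l₂ c₂ h₁ h₂ heq
    obtain ⟨u, d⟩ := p
    have hBritton := ReducedWord.map_fst_eq_and_of_prod_eq (φmn m n hm hn)
      (w₁ := toRW m n c₁ ((u,d)::l₁') h₁) (w₂ := toRW m n c₂ l₂ h₂)
      (by rw [toRW_prod, toRW_prod]; exact heq)
    have hpat : (u :: l₁'.map Prod.fst) = l₂.map Prod.fst := by
      have h5 := hBritton.1
      rw [toRW_map_fst, toRW_map_fst] at h5
      simpa using h5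
    cases l₂ with
    | nil => exact absurd hpat (by simp)
    | cons q l₂' =>
    obtain ⟨u', d'⟩ := q
    have hu : u' = u := by
      simp only [List.map_cons, List.cons.injEq] at hpat
      exact hpat.1.symm
    subst hu
    -- heads are equal
    have hhead : c₁ = c₂ := by
      have hmem := hBritton.2 u' (by rw [toRW_toList]; simp)
      rw [toRW_head, toRW_head] at hmem
      have hd9 : ((ofAdd (c₁:ℤ))⁻¹ * ofAdd (c₂:ℤ) : Multiplicative ℤ)
          = ofAdd ((c₂:ℤ) - c₁) := by
        rw [← ofAdd_neg, ← ofAdd_add]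
        congr 1
        ring
      rw [hd9] at hmem
      have hb₁ : c₁ < bound m n u' := h₁.1 (u', d) (by simp)
      have hb₂ : c₂ < bound m n u' := h₂.1 (u', d') (by simp)
      rcases Int.units_eq_one_or u' with rfl | rfl
      · rw [toSubgroup_neg_one] at hmem
        have hdvd : (n:ℤ) ∣ ((c₂:ℤ) - c₁) := (mem_zpowers_ofAdd_iff' _ _).1 hmem
        have h0 : ((c₂:ℤ) - c₁) = 0 := Int.eq_zero_of_abs_lt_dvd hdvd (by
          rw [abs_sub_lt_iff]
          rw [show bound m n 1 = n from by simp [bound]] at hb₁ hb₂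
          constructor <;>
            · push_cast
              omega)
        omega
      · rw [neg_neg, toSubgroup_one] at hmem
        have hdvd : (m:ℤ) ∣ ((c₂:ℤ) - c₁) := (mem_zpowers_ofAdd_iff' _ _).1 hmem
        have h0 : ((c₂:ℤ) - c₁) = 0 := Int.eq_zero_of_abs_lt_dvd hdvd (by
          rw [abs_sub_lt_iff]
          rw [show bound m n (-1) = m from by
            simp only [bound, if_neg (show (-1:ℤˣ) ≠ 1 by decide)]] at hb₁ hb₂
          constructor <;>
            · push_cast
              omega)
        omega
    subst hhead
    rw [rprod_cons, rprod_cons, mul_assoc, mul_assoc] at heq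
    have heq2 : rprod m n hm hn d l₁' = rprod m n hm hn d' l₂' :=
      mul_left_cancel (mul_left_cancel heq)
    obtain ⟨hd, hl⟩ := ih d l₂' d' (valid_tail m n h₁) (valid_tail m n h₂) heq2
    exact ⟨rfl, by rw [hd, hl]⟩

end Stmt8

namespace Stmt8
open HNNExtension HNNExtension.NormalWord
variable (m n : ℕ) (hm : 0 < m) (hn : 0 < n)

def fH : Fin 2 → H m n hm hn := fun i => if i = 0 then ha m n hm hn else ht m n hm hn

lemma frel : ∀ r ∈ bsRel m n, FreeGroup.lift (fH m n hm hn) r = 1 := by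
  intro r hr
  rw [bsRel, Set.mem_singleton_iff] at hr
  subst hr
  have h1 : ht m n hm hn * (ha m n hm hn)^m = (ha m n hm hn)^n * ht m n hm hn := by
    rw [← ha_pow, ← ha_pow]
    have := t_mul_pow m n hm hn 1
    simpa using this
  simp only [map_mul, map_inv, map_pow, FreeGroup.lift_apply_of]
  rw [show fH m n hm hn 1 = ht m n hm hn from rfl, show fH m n hm hn 0 = ha m n hm hn from rfl]
  rw [h1]
  group

/-- the embedding of the presented group into the HNN extension -/
def Ψ : PresentedGroup (bsRel m n) →* H m n hm hn :=
  PresentedGroup.toGroup (frel m n hm hn)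

lemma Ψ_eval (w : List (Fin 4)) : Ψ m n hm hn (bsEval m n w) = hEval m n hm hn w := by
  rw [bsEval, hEval, map_list_prod, List.map_map]
  congr 1
  apply List.map_congr_left
  intro x hx
  fin_cases x <;>
    simp [Function.comp, genH, Ψ, PresentedGroup.toGroup.of, fH, map_inv]

end Stmt8

namespace Stmt8
open HNNExtension HNNExtension.NormalWord
variable (m n : ℕ) (hm : 0 < m) (hn : 0 < n)

/-- list part of `rprod` -/
def lProd (l : List (ℤˣ × ℕ)) : H m n hm hn :=
  (l.map (fun p => (t:H m n hm hn) ^ ((p.1 : ℤˣ) : ℤ) * of (ofAdd ((p.2:ℕ):ℤ)))).prod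

lemma rprod_eq (c : ℕ) (l : List (ℤˣ × ℕ)) :
    rprod m n hm hn c l = of (ofAdd (c:ℤ)) * lProd m n hm hn l := rfl

lemma lProd_append (l₁ l₂ : List (ℤˣ × ℕ)) :
    lProd m n hm hn (l₁ ++ l₂) = lProd m n hm hn l₁ * lProd m n hm hn l₂ := by
  simp [lProd]

lemma lProd_singleton (p : ℤˣ × ℕ) :
    lProd m n hm hn [p] = (t:H m n hm hn) ^ ((p.1 : ℤˣ) : ℤ) * of (ofAdd ((p.2:ℕ):ℤ)) := by
  simp [lProd]

/-- add `k` to the last block -/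
def bumpK (k : ℕ) : List (ℤˣ × ℕ) → List (ℤˣ × ℕ)
  | [] => []
  | [p] => [(p.1, p.2 + k)]
  | p :: q :: l => p :: bumpK k (q :: l)

/-- append `a^k` to a block decomposition -/
def addLast (k c : ℕ) (l : List (ℤˣ × ℕ)) : ℕ × List (ℤˣ × ℕ) :=
  if l = [] then (c + k, []) else (c, bumpK k l)

/-- ends with a positive `a`-block -/
def endsA (c : ℕ) (l : List (ℤˣ × ℕ)) : Prop :=
  0 < (l.getLast?.map Prod.snd).getD c

lemma bumpK_head_fst (k : ℕ) (q : ℤˣ × ℕ) (l : List (ℤˣ × ℕ)) :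
    (bumpK k (q :: l)).head?.map Prod.fst = some q.1 := by
  cases l <;> rfl

lemma valid_bumpK (k : ℕ) : ∀ (l : List (ℤˣ × ℕ)) (c : ℕ), valid m n c l →
    valid m n c (bumpK k l) := by
  intro l
  induction l with
  | nil => intro c h; exact h
  | cons p l ih =>
    intro c h
    cases l with
    | nil =>
      obtain ⟨u, d⟩ := p
      refine ⟨?_, List.isChain_singleton _⟩
      intro q hq
      simp only [bumpK, List.head?_cons, Option.mem_def, Option.some.injEq] at hq
      subst hq
      exact h.1 (u, d) rfl
    | cons q l' =>
      obtain ⟨u, d⟩ := p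
      have htail := ih d (valid_tail m n h)
      set p : ℤˣ × ℕ := (u, d) with hp
      show valid m n c (p :: bumpK k (q :: l'))
      refine ⟨?_, ?_⟩
      · intro x hx
        simp only [List.head?_cons, Option.mem_def, Option.some.injEq] at hx
        subst hx
        exact h.1 p rfl
      · unfold List.Chain'
        rw [List.isChain_cons]
        refine ⟨?_, htail.2⟩
        intro y hy
        have hfst : y.1 = q.1 := by
          have := bumpK_head_fst k q l'
          rw [Option.mem_def] at hy
          rw [hy] at this
          simpa using this
        have hRel : Rel m n p q := (List.isChain_cons.1 h.2).1 q rfl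
        exact ⟨by rw [hfst]; exact hRel.1, fun h0 => by rw [hfst]; exact hRel.2 h0⟩

lemma lProd_bumpK (k : ℕ) : ∀ (l : List (ℤˣ × ℕ)), l ≠ [] →
    lProd m n hm hn (bumpK k l) = lProd m n hm hn l * of (ofAdd ((k:ℕ):ℤ)) := by
  intro l
  induction l with
  | nil => intro h; exact absurd rfl h
  | cons p l ih =>
    intro _
    cases l with
    | nil =>
      obtain ⟨u, d⟩ := p
      show lProd m n hm hn [(u, d + k)] = _
      rw [lProd_singleton, lProd_singleton]
      push_cast
      rw [ofAdd_add, map_mul, mul_assoc]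
    | cons q l' =>
      show lProd m n hm hn (p :: bumpK k (q :: l')) = _
      have : lProd m n hm hn (p :: bumpK k (q::l'))
          = lProd m n hm hn [p] * lProd m n hm hn (bumpK k (q::l')) := by
        rw [← lProd_append]; rfl
      rw [this, ih (by simp), ← mul_assoc, ← lProd_append]
      rfl

lemma endsA_bumpK (k : ℕ) (hk : 0 < k) : ∀ (l : List (ℤˣ × ℕ)) (c : ℕ), l ≠ [] →
    endsA c (bumpK k l) := by
  intro l
  induction l with
  | nil => intro c h; exact absurd rfl h
  | cons p l ih =>
    intro c _
    cases l with
    | nil =>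
      show endsA c [(p.1, p.2 + k)]
      unfold endsA
      simp
      omega
    | cons q l' =>
      have h9 := ih c (by simp)
      show endsA c (p :: bumpK k (q :: l'))
      unfold endsA at h9 ⊢
      have h8 : bumpK k (q :: l') = (bumpK k (q :: l')).head?.get (by
          cases l' <;> simp [bumpK]) :: (bumpK k (q :: l')).tail := by
        cases l' <;> rfl
      rw [h8, List.getLast?_cons_cons, ← h8]
      exact h9

lemma valid_addLast (k c : ℕ) (l : List (ℤˣ × ℕ)) (h : valid m n c l) :
    valid m n (addLast k c l).1 (addLast k c l).2 := by
  rw [addLast]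
  split
  · exact valid_nil m n _
  · exact valid_bumpK m n k l c h

lemma rprod_addLast (k c : ℕ) (l : List (ℤˣ × ℕ)) :
    rprod m n hm hn (addLast k c l).1 (addLast k c l).2
      = rprod m n hm hn c l * of (ofAdd ((k:ℕ):ℤ)) := by
  rw [addLast]
  split
  · next hnil =>
    subst hnil
    rw [rprod_nil, rprod_nil]
    push_cast
    rw [ofAdd_add, map_mul]
  · next hne =>
    rw [rprod_eq, rprod_eq, lProd_bumpK m n hm hn k l hne, mul_assoc]

lemma endsA_addLast (k c : ℕ) (hk : 0 < k) (l : List (ℤˣ × ℕ)) :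
    endsA (addLast k c l).1 (addLast k c l).2 := by
  rw [addLast]
  split
  · unfold endsA
    simp
    omega
  · next hne => exact endsA_bumpK k hk l c hne

end Stmt8

namespace Stmt8
open HNNExtension HNNExtension.NormalWord
variable (m n : ℕ) (hm : 0 < m) (hn : 0 < n)

lemma valid_append_left {c : ℕ} {l₀ l₁ : List (ℤˣ × ℕ)} (h : valid m n c (l₀ ++ l₁)) :
    valid m n c l₀ := by
  constructor
  · intro p hp
    cases l₀ with
    | nil => simp at hp
    | cons q l₀' =>
      simp only [List.head?_cons, Option.mem_def, Option.some.injEq] at hp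
      subst hp
      exact h.1 _ rfl
  · exact (List.isChain_append.mp h.2).1

lemma pow_mul_t' (c : ℕ) :
    (of (ofAdd (c:ℤ)) : H m n hm hn) * t
      = of (ofAdd ((c % n : ℕ):ℤ)) * ((t:H m n hm hn) * of (ofAdd ((m * (c / n) : ℕ):ℤ))) := by
  have := pow_mul_t m n hm hn c
  rw [ht] at this
  rw [this, mul_assoc]

lemma pow_mul_tinv' (c : ℕ) :
    (of (ofAdd (c:ℤ)) : H m n hm hn) * (t:H m n hm hn)⁻¹
      = of (ofAdd ((c % m : ℕ):ℤ)) * ((t:H m n hm hn)⁻¹ * of (ofAdd ((n * (c / m) : ℕ):ℤ))) := by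
  have := pow_mul_tinv m n hm hn c
  rw [ht] at this
  rw [this, mul_assoc]

lemma lProd_nil : lProd m n hm hn [] = 1 := rfl

lemma lProd_cons (p : ℤˣ × ℕ) (l : List (ℤˣ × ℕ)) :
    lProd m n hm hn (p :: l)
      = (t:H m n hm hn) ^ ((p.1 : ℤˣ) : ℤ) * of (ofAdd ((p.2:ℕ):ℤ)) * lProd m n hm hn l := by
  simp [lProd, mul_assoc]

lemma app_t (c : ℕ) (l : List (ℤˣ × ℕ)) (h : valid m n c l) :
    ∃ c' l', valid m n c' l' ∧
      rprod m n hm hn c' l' = rprod m n hm hn c l * (t : H m n hm hn) := by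
  rcases l.eq_nil_or_concat' with rfl | ⟨l₀, ⟨u,d⟩, rfl⟩
  · refine ⟨c % n, [(1, m * (c/n))], ⟨?_, List.isChain_singleton _⟩, ?_⟩
    · intro p hp
      simp only [List.head?_cons, Option.mem_def, Option.some.injEq] at hp
      subst hp
      simpa [bound] using Nat.mod_lt _ hn
    · rw [rprod_eq, rprod_eq, lProd_cons, lProd_nil]
      dsimp only
      rw [show (((1:ℤˣ):ℤ)) = 1 from rfl, zpow_one]
      rw [mul_one, ← pow_mul_t' m n hm hn c, mul_one]
  · by_cases hcase : d % n = 0 ∧ u = -1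
    · obtain ⟨hd0, rfl⟩ := hcase
      have hdn : (d : ℕ) = n * (d / n) := (Nat.mul_div_cancel' (Nat.dvd_of_mod_eq_zero hd0)).symm
      have hcomm : (of (ofAdd ((d:ℕ):ℤ)) : H m n hm hn) * t
          = t * of (ofAdd ((m * (d/n) : ℕ):ℤ)) := by
        conv_lhs => rw [hdn]
        have h7 := t_mul_pow m n hm hn (d / n)
        rw [ht] at h7
        exact h7.symm
      have hard : rprod m n hm hn c (l₀ ++ [((-1:ℤˣ), d)]) * (t : H m n hm hn)
          = rprod m n hm hn c l₀ * of (ofAdd ((m * (d/n) : ℕ):ℤ)) := by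
        rw [rprod_eq, rprod_eq, lProd_append, lProd_cons, lProd_nil, mul_one]
        simp only [mul_assoc]
        rw [hcomm, show (((-1:ℤˣ):ℤ)) = -1 from rfl, zpow_neg_one, inv_mul_cancel_left]
      refine ⟨(addLast (m*(d/n)) c l₀).1, (addLast (m*(d/n)) c l₀).2,
        valid_addLast m n _ _ _ (valid_append_left m n h), ?_⟩
      rw [rprod_addLast, hard]
    · refine ⟨c, l₀ ++ [(u, d % n), (1, m * (d/n))], ⟨?_, ?_⟩, ?_⟩
      · intro p hp
        cases l₀ with
        | nil =>
          simp only [List.nil_append, List.head?_cons, Option.mem_def, Option.some.injEq] at hp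
          subst hp
          exact h.1 (u, d) rfl
        | cons q l₀' =>
          simp only [List.cons_append, List.head?_cons, Option.mem_def, Option.some.injEq] at hp
          subst hp
          exact h.1 _ rfl
      · obtain ⟨h1, h2, h3⟩ := List.isChain_append.mp h.2
        refine List.isChain_append.mpr ⟨h1, ?_, ?_⟩
        · rw [List.isChain_pair]
          refine ⟨by simpa [bound] using Nat.mod_lt _ hn, ?_⟩
          intro h0
          rcases Int.units_eq_one_or u with rfl | rfl
          · rfl
          · exact absurd ⟨h0, rfl⟩ hcase
        · intro x hx y hy
          simp only [List.head?_cons, Option.mem_def, Option.some.injEq] at hy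
          subst hy
          have := h3 x hx (u, d) rfl
          exact ⟨this.1, this.2⟩
      · rw [rprod_eq, rprod_eq, lProd_append, lProd_append, lProd_cons, lProd_cons, lProd_cons,
          lProd_nil]
        simp only [mul_assoc, mul_one]
        rw [show (((1:ℤˣ):ℤ)) = 1 from rfl, zpow_one]
        rw [pow_mul_t' m n hm hn d]

lemma app_tinv (c : ℕ) (l : List (ℤˣ × ℕ)) (h : valid m n c l) :
    ∃ c' l', valid m n c' l' ∧
      rprod m n hm hn c' l' = rprod m n hm hn c l * (t : H m n hm hn)⁻¹ := by
  rcases l.eq_nil_or_concat' with rfl | ⟨l₀, ⟨u,d⟩, rfl⟩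
  · refine ⟨c % m, [(-1, n * (c/m))], ⟨?_, List.isChain_singleton _⟩, ?_⟩
    · intro p hp
      simp only [List.head?_cons, Option.mem_def, Option.some.injEq] at hp
      subst hp
      simpa [bound, show ((-1:ℤˣ)) ≠ 1 by decide] using Nat.mod_lt _ hm
    · rw [rprod_eq, rprod_eq, lProd_cons, lProd_nil]
      dsimp only
      rw [show (((-1:ℤˣ):ℤ)) = -1 from rfl, zpow_neg_one]
      rw [mul_one, ← pow_mul_tinv' m n hm hn c, mul_one]
  · by_cases hcase : d % m = 0 ∧ u = 1
    · obtain ⟨hd0, rfl⟩ := hcase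
      have hdm : (d : ℕ) = m * (d / m) := (Nat.mul_div_cancel' (Nat.dvd_of_mod_eq_zero hd0)).symm
      have hcomm : (of (ofAdd ((d:ℕ):ℤ)) : H m n hm hn) * (t:H m n hm hn)⁻¹
          = (t:H m n hm hn)⁻¹ * of (ofAdd ((n * (d/m) : ℕ):ℤ)) := by
        conv_lhs => rw [hdm]
        have h7 := inv_t_mul_pow m n hm hn (d / m)
        rw [ht] at h7
        exact h7.symm
      have hard : rprod m n hm hn c (l₀ ++ [((1:ℤˣ), d)]) * (t : H m n hm hn)⁻¹
          = rprod m n hm hn c l₀ * of (ofAdd ((n * (d/m) : ℕ):ℤ)) := by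
        rw [rprod_eq, rprod_eq, lProd_append, lProd_cons, lProd_nil, mul_one]
        simp only [mul_assoc]
        rw [hcomm, show (((1:ℤˣ):ℤ)) = 1 from rfl, zpow_one, mul_inv_cancel_left]
      refine ⟨(addLast (n*(d/m)) c l₀).1, (addLast (n*(d/m)) c l₀).2,
        valid_addLast m n _ _ _ (valid_append_left m n h), ?_⟩
      rw [rprod_addLast, hard]
    · refine ⟨c, l₀ ++ [(u, d % m), (-1, n * (d/m))], ⟨?_, ?_⟩, ?_⟩
      · intro p hp
        cases l₀ with
        | nil =>
          simp only [List.nil_append, List.head?_cons, Option.mem_def, Option.some.injEq] at hp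
          subst hp
          exact h.1 (u, d) rfl
        | cons q l₀' =>
          simp only [List.cons_append, List.head?_cons, Option.mem_def, Option.some.injEq] at hp
          subst hp
          exact h.1 _ rfl
      · obtain ⟨h1, h2, h3⟩ := List.isChain_append.mp h.2
        refine List.isChain_append.mpr ⟨h1, ?_, ?_⟩
        · rw [List.isChain_pair]
          refine ⟨by simpa [bound, show ((-1:ℤˣ)) ≠ 1 by decide] using Nat.mod_lt _ hm, ?_⟩
          intro h0
          rcases Int.units_eq_one_or u with rfl | rfl
          · exact absurd ⟨h0, rfl⟩ hcase
          · rfl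
        · intro x hx y hy
          simp only [List.head?_cons, Option.mem_def, Option.some.injEq] at hy
          subst hy
          have := h3 x hx (u, d) rfl
          exact ⟨this.1, this.2⟩
      · rw [rprod_eq, rprod_eq, lProd_append, lProd_append, lProd_cons, lProd_cons, lProd_cons,
          lProd_nil]
        simp only [mul_assoc, mul_one]
        rw [show (((-1:ℤˣ):ℤ)) = -1 from rfl, zpow_neg_one]
        rw [pow_mul_tinv' m n hm hn d]

lemma hEval_singleton (x : Fin 4) : hEval m n hm hn [x] = genH m n hm hn x := by
  simp [hEval]

lemma norm_exists (q : List (Fin 4)) (hq : (1 : Fin 4) ∉ q) :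
    ∃ c l, valid m n c l ∧ rprod m n hm hn c l = hEval m n hm hn q := by
  induction q using List.reverseRecOn with
  | nil => exact ⟨0, [], valid_nil m n 0, by simp [rprod_nil, hEval]⟩
  | append_singleton q x ih =>
    obtain ⟨c, l, hv, he⟩ := ih (fun hmem => hq (List.mem_append_left _ hmem))
    have hx : x ≠ 1 := fun h => hq (by simp [h])
    rw [hEval_append, hEval_singleton]
    fin_cases x
    · refine ⟨(addLast 1 c l).1, (addLast 1 c l).2, valid_addLast m n _ _ _ hv, ?_⟩
      rw [rprod_addLast, he]
      first
      | rfl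
      | simp [genH, ha]
    · exact absurd rfl hx
    · obtain ⟨c', l', hv', he'⟩ := app_t m n hm hn c l hv
      refine ⟨c', l', hv', ?_⟩
      rw [he', he]
      first
      | rfl
      | simp [genH, ht]
    · obtain ⟨c', l', hv', he'⟩ := app_tinv m n hm hn c l hv
      refine ⟨c', l', hv', ?_⟩
      rw [he', he]
      first
      | rfl
      | simp [genH, ht]

end Stmt8

namespace Stmt8
open HNNExtension HNNExtension.NormalWord
variable (m n : ℕ) (hm : 0 < m) (hn : 0 < n)

lemma noInfix_of_irr {w : List (Fin 4)} (hirr : ¬ ∃ w', bsRw m n w w') :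
    ∀ uv ∈ bsRules m n, ¬ uv.1 <:+: w := by
  rintro ⟨u, v⟩ hmem ⟨s, t2, hst⟩
  exact hirr ⟨s ++ v ++ t2, s, t2, u, v, hmem, hst.symm, rfl⟩

lemma split_ones : ∀ (w : List (Fin 4)), (∀ x : Fin 4, x ≠ 1 → ¬ [1, x] <:+: w) →
    ∃ p k, w = p ++ List.replicate k 1 ∧ (1 : Fin 4) ∉ p := by
  intro w
  induction w with
  | nil => exact fun _ => ⟨[], 0, rfl, by simp⟩
  | cons x w' ih =>
    intro h
    obtain ⟨p, k, hw', hp⟩ := ih (fun y hy hinf => h y hy (hinf.trans (List.suffix_cons x w').isInfix))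
    by_cases hx : x = 1
    · subst hx
      cases p with
      | nil =>
        refine ⟨[], k + 1, ?_, by simp⟩
        rw [hw', List.replicate_succ]
        simp
      | cons y p' =>
        have hy : y ≠ 1 := fun h1 => hp (by simp [h1])
        exact absurd (⟨[], p' ++ List.replicate k 1, by simp [hw']⟩ : [1, y] <:+: (1 :: w'))
          (h y hy)
    · exact ⟨x :: p, k, by rw [hw']; rfl, by
        intro hmem
        rcases List.mem_cons.mp hmem with h1 | h1
        · exact hx h1.symm
        · exact hp h1⟩

/-- parse a positive word into blocks -/
def parse : List (Fin 4) → ℕ × List (ℤˣ × ℕ)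
  | [] => (0, [])
  | x :: r =>
    let P := parse r
    if x = 0 then (P.1 + 1, P.2)
    else if x = 2 then (0, (1, P.1) :: P.2)
    else if x = 3 then (0, (-1, P.1) :: P.2)
    else (0, [])

lemma wordOf_succ (c : ℕ) (l : List (ℤˣ × ℕ)) :
    wordOf (c + 1) l = 0 :: wordOf c l := by
  cases l with
  | nil => show List.replicate (c+1) 0 = _; rw [List.replicate_succ]; rfl
  | cons p l' =>
    obtain ⟨u, d⟩ := p
    show List.replicate (c+1) 0 ++ _ = 0 :: (List.replicate c 0 ++ _)
    rw [List.replicate_succ]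
    rfl

lemma parse_wordOf : ∀ (p : List (Fin 4)), (1 : Fin 4) ∉ p →
    wordOf (parse p).1 (parse p).2 = p := by
  intro p
  induction p with
  | nil => intro _; rfl
  | cons x r ih =>
    intro hx
    have hr := ih (fun hh => hx (List.mem_cons_of_mem _ hh))
    fin_cases x
    · show wordOf ((parse r).1 + 1) (parse r).2 = _
      rw [wordOf_succ, hr]
      rfl
    · exact absurd (by simp) hx
    · show wordOf 0 ((1, (parse r).1) :: (parse r).2) = _
      show List.replicate 0 0 ++ ((if (1:ℤˣ) = 1 then (2:Fin 4) else 3) :: _) = _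
      rw [if_pos rfl]
      simp only [List.replicate_zero, List.nil_append, List.cons.injEq]
      exact ⟨rfl, hr⟩
    · show wordOf 0 ((-1, (parse r).1) :: (parse r).2) = _
      show List.replicate 0 0 ++ ((if (-1:ℤˣ) = 1 then (2:Fin 4) else 3) :: _) = _
      rw [if_neg (by decide)]
      simp only [List.replicate_zero, List.nil_append, List.cons.injEq]
      exact ⟨rfl, hr⟩

/-- no bad positive patterns -/
def Nice (w : List (Fin 4)) : Prop :=
  ¬ ([2, 3] <:+: w) ∧ ¬ ([3, 2] <:+: w) ∧
    ¬ ((List.replicate n 0 ++ [2]) <:+: w) ∧ ¬ ((List.replicate m 0 ++ [3]) <:+: w)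

lemma Nice.mono {w v : List (Fin 4)} (h : Nice m n w) (hv : v <:+: w) : Nice m n v :=
  ⟨fun h1 => h.1 (h1.trans hv), fun h1 => h.2.1 (h1.trans hv),
    fun h1 => h.2.2.1 (h1.trans hv), fun h1 => h.2.2.2 (h1.trans hv)⟩

lemma sletter (u : ℤˣ) : (if u = 1 then (2:Fin 4) else 3) ≠ 1 := by
  split <;> decide

lemma valid_of_nice : ∀ (l : List (ℤˣ × ℕ)) (c : ℕ), Nice m n (wordOf c l) →
    valid m n c l := by
  intro l
  induction l with
  | nil => exact fun c _ => valid_nil m n c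
  | cons p l' ih =>
    obtain ⟨u, d⟩ := p
    intro c hnice
    have hsuf : wordOf d l' <:+: wordOf c ((u,d) :: l') := by
      refine ⟨List.replicate c 0 ++ [if u = 1 then (2:Fin 4) else 3], [], ?_⟩
      show _ ++ _ ++ [] = List.replicate c 0 ++ ((if u = 1 then (2:Fin 4) else 3) :: wordOf d l')
      simp
    have hvl' := ih d (hnice.mono m n hsuf)
    have hbound : c < bound m n u := by
      by_contra hle
      push_neg at hle
      have hinf : (List.replicate (bound m n u) 0 ++ [if u = 1 then (2:Fin 4) else 3])
          <:+: wordOf c ((u,d) :: l') := by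
        refine ⟨List.replicate (c - bound m n u) 0, wordOf d l', ?_⟩
        show List.replicate (c - bound m n u) 0 ++ (List.replicate (bound m n u) 0
            ++ [if u = 1 then (2:Fin 4) else 3]) ++ wordOf d l'
          = List.replicate c 0 ++ ((if u = 1 then (2:Fin 4) else 3) :: wordOf d l')
        rw [← List.append_assoc (List.replicate (c - bound m n u) 0),
          ← List.replicate_add, show c - bound m n u + bound m n u = c from by omega]
        simp
      rcases Int.units_eq_one_or u with rfl | rfl
      · rw [if_pos rfl] at hinf
        exact hnice.2.2.1 (by simpa [bound] using hinf)
      · rw [if_neg (by decide)] at hinf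
        exact hnice.2.2.2 (by
          have : bound m n (-1) = m := by simp [bound, show ((-1:ℤˣ)) ≠ 1 by decide]
          rwa [this] at hinf)
    refine ⟨?_, ?_⟩
    · intro q hq
      simp only [List.head?_cons, Option.mem_def, Option.some.injEq] at hq
      subst hq
      exact hbound
    · unfold List.Chain'
      rw [List.isChain_cons]
      refine ⟨?_, hvl'.2⟩
      intro q hq
      refine ⟨?_, ?_⟩
      · cases l' with
        | nil => simp at hq
        | cons q' l'' =>
          simp only [List.head?_cons, Option.mem_def, Option.some.injEq] at hq
          subst hq
          exact hvl'.1 _ rfl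
      · intro hd0
        by_contra hne
        cases l' with
        | nil => simp at hq
        | cons q' l'' =>
          simp only [List.head?_cons, Option.mem_def, Option.some.injEq] at hq
          rw [← hq] at hne
          subst hd0
          obtain ⟨u', d'⟩ := q'
          have hpair : ([if u = 1 then (2:Fin 4) else 3, if u' = 1 then (2:Fin 4) else 3])
              <:+: wordOf c ((u,0) :: (u',d') :: l'') := by
            refine ⟨List.replicate c 0, wordOf d' l'', ?_⟩
            show _ = List.replicate c 0 ++ ((if u = 1 then (2:Fin 4) else 3) ::
              (List.replicate 0 0 ++ ((if u' = 1 then (2:Fin 4) else 3) :: wordOf d' l'')))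
            simp
          have hne' : u ≠ u' := fun h => hne h
          rcases Int.units_eq_one_or u with rfl | rfl <;>
            rcases Int.units_eq_one_or u' with rfl | rfl
          · exact hne' rfl
          · rw [if_pos rfl, if_neg (by decide)] at hpair
            exact hnice.1 hpair
          · rw [if_neg (by decide), if_pos rfl] at hpair
            exact hnice.2.1 hpair
          · exact hne' rfl

lemma getLast_wordOf : ∀ (l : List (ℤˣ × ℕ)) (c : ℕ), endsA c l →
    (wordOf c l).getLast? = some 0 := by
  intro l
  induction l with
  | nil =>
    intro c hc
    unfold endsA at hc
    simp only [List.getLast?_nil, Option.map_none, Option.getD_none] at hc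
    obtain ⟨c', rfl⟩ := Nat.exists_eq_succ_of_ne_zero hc.ne'
    show (List.replicate (c'+1) 0).getLast? = some 0
    rw [List.replicate_succ']
    exact List.getLast?_concat
  | cons p l' ih =>
    intro c hc
    obtain ⟨u, d⟩ := p
    cases l' with
    | nil =>
      unfold endsA at hc
      simp only [List.getLast?_singleton, Option.map_some, Option.getD_some] at hc
      obtain ⟨d', rfl⟩ := Nat.exists_eq_succ_of_ne_zero hc.ne'
      show (List.replicate c (0:Fin 4) ++ ((if u = 1 then (2:Fin 4) else 3) ::
        List.replicate (d'+1) (0:Fin 4))).getLast? = some 0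
      rw [List.replicate_succ', ← List.cons_append, ← List.append_assoc]
      exact List.getLast?_concat
    | cons q l'' =>
      have hc' : endsA d (q :: l'') := by
        unfold endsA at hc ⊢
        rwa [List.getLast?_cons_cons] at hc
      have hlast := ih d hc'
      show (List.replicate c (0:Fin 4) ++ ((if u = 1 then (2:Fin 4) else 3) ::
        wordOf d (q :: l''))).getLast? = some 0
      have hne : wordOf d (q :: l'') ≠ [] := fun h => by rw [h] at hlast; simp at hlast
      rw [show ((if u = 1 then (2:Fin 4) else 3) :: wordOf d (q :: l''))
          = [if u = 1 then (2:Fin 4) else 3] ++ wordOf d (q :: l'') from rfl]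
      rw [← List.append_assoc]
      rw [List.getLast?_append_of_ne_nil _ hne]
      exact hlast

end Stmt8

namespace Stmt8
open HNNExtension HNNExtension.NormalWord
variable (m n : ℕ)

lemma bsEval_append (u v : List (Fin 4)) :
    bsEval m n (u ++ v) = bsEval m n u * bsEval m n v := by
  simp [bsEval]

lemma bsEval_rep0 (k : ℕ) :
    bsEval m n (List.replicate k 0) = (PresentedGroup.of 0 : PresentedGroup (bsRel m n)) ^ k := by
  induction k with
  | zero => simp [bsEval]
  | succ k ih =>
    rw [List.replicate_succ]
    show bsEval m n (0 :: List.replicate k 0) = _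
    simp only [bsEval, List.map_cons, List.prod_cons] at ih ⊢
    rw [ih, pow_succ']
    norm_num

lemma bsEval_rep1 (k : ℕ) :
    bsEval m n (List.replicate k 1)
      = ((PresentedGroup.of 0 : PresentedGroup (bsRel m n))⁻¹) ^ k := by
  induction k with
  | zero => simp [bsEval]
  | succ k ih =>
    rw [List.replicate_succ]
    show bsEval m n (1 :: List.replicate k 1) = _
    simp only [bsEval, List.map_cons, List.prod_cons] at ih ⊢
    rw [ih, pow_succ']
    norm_num

lemma mem_closure_of_pos (w : List (Fin 4)) (h : (1 : Fin 4) ∉ w) :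
    bsEval m n w ∈ Submonoid.closure
        ({PresentedGroup.of 0, PresentedGroup.of 1, (PresentedGroup.of 1)⁻¹} :
          Set (PresentedGroup (bsRel m n))) := by
  induction w with
  | nil =>
    show (1 : PresentedGroup (bsRel m n)) ∈ _
    exact one_mem _
  | cons x w ih =>
    have hx : x ≠ 1 := fun hx => h (by simp [hx])
    have ihx := ih (fun hh => h (List.mem_cons_of_mem _ hh))
    show bsEval m n (x :: w) ∈ _
    simp only [bsEval, List.map_cons, List.prod_cons]
    refine mul_mem ?_ ihx
    fin_cases x
    · exact Submonoid.subset_closure (show (PresentedGroup.of 0 : PresentedGroup (bsRel m n)) ∈ _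
        from Set.mem_insert _ _)
    · exact absurd rfl hx
    · exact Submonoid.subset_closure (show (PresentedGroup.of 1 : PresentedGroup (bsRel m n)) ∈ _
        from Set.mem_insert_of_mem _ (Set.mem_insert _ _))
    · exact Submonoid.subset_closure
        (show ((PresentedGroup.of 1)⁻¹ : PresentedGroup (bsRel m n)) ∈ _
        from Set.mem_insert_of_mem _ (Set.mem_insert_of_mem _ rfl))

lemma exists_word (x : PresentedGroup (bsRel m n))
    (hx : x ∈ Submonoid.closure
        ({PresentedGroup.of 0, PresentedGroup.of 1, (PresentedGroup.of 1)⁻¹} :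
          Set (PresentedGroup (bsRel m n)))) :
    ∃ q, (1 : Fin 4) ∉ q ∧ bsEval m n q = x := by
  induction hx using Submonoid.closure_induction with
  | mem y hy =>
    rcases hy with h | h | h
    · exact ⟨[0], by simp, by simp [bsEval, h]⟩
    · exact ⟨[2], by simp, by simp [bsEval, h]⟩
    · rw [Set.mem_singleton_iff] at h
      exact ⟨[3], by simp, by simp [bsEval, h]⟩
  | one => exact ⟨[], by simp, by simp [bsEval]⟩
  | mul y z hy hz ihy ihz =>
    obtain ⟨q₁, hq₁, he₁⟩ := ihy
    obtain ⟨q₂, hq₂, he₂⟩ := ihz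
    exact ⟨q₁ ++ q₂, by simp [hq₁, hq₂], by rw [bsEval_append, he₁, he₂]⟩

end Stmt8


open Stmt8

/-- For `1 ≤ m < n`, an element of `BS(m,n)` lies in the submonoid generated
by `S₁ = {a, t, t⁻¹}` if and only if its irreducible normal form (with respect to the
complete rewriting system above) contains no occurrence of the letter `A = a⁻¹`. -/
theorem stmt8 (m n : ℕ) (hm : 1 ≤ m) (hmn : m < n) (w : List (Fin 4))
    (hirr : ¬ ∃ w', bsRw m n w w') :
    bsEval m n w ∈ Submonoid.closure
        ({PresentedGroup.of 0, PresentedGroup.of 1, (PresentedGroup.of 1)⁻¹} :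
          Set (PresentedGroup (bsRel m n))) ↔ (1 : Fin 4) ∉ w := by
  have hm' : 0 < m := hm
  have hn' : 0 < n := Nat.lt_trans hm' hmn
  have hnR := noInfix_of_irr m n hirr
  have h1x : ∀ x : Fin 4, x ≠ 1 → ¬ [1, x] <:+: w := by
    intro x hx
    fin_cases x
    · exact hnR ([1,0],[]) (by simp [bsRules])
    · exact absurd rfl hx
    · exact hnR ([1,2], List.replicate (n-1) 0 ++ 2 :: List.replicate m 1) (by simp [bsRules])
    · exact hnR ([1,3], List.replicate (m-1) 0 ++ 3 :: List.replicate n 1) (by simp [bsRules])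
  obtain ⟨p, k, rfl, hp⟩ := split_ones w h1x
  rcases Nat.eq_zero_or_pos k with rfl | hk
  · rw [List.replicate_zero, List.append_nil]
    exact ⟨fun _ => hp, fun _ => mem_closure_of_pos m n p hp⟩
  · constructor
    · intro hin
      exfalso
      obtain ⟨q, hq1, hq2⟩ := exists_word m n _ hin
      have heval : bsEval m n (q ++ List.replicate k 0) = bsEval m n p := by
        rw [bsEval_append, hq2, bsEval_append, bsEval_rep1, bsEval_rep0]
        rw [mul_assoc, inv_pow, inv_mul_cancel, mul_one]
      have hH : hEval m n hm' hn' (q ++ List.replicate k 0) = hEval m n hm' hn' p := by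
        rw [← Ψ_eval, ← Ψ_eval, heval]
      obtain ⟨c, l, hv, he⟩ := norm_exists m n hm' hn' q hq1
      have hvr := valid_addLast m n k c l hv
      have her : rprod m n hm' hn' (addLast k c l).1 (addLast k c l).2
          = hEval m n hm' hn' (q ++ List.replicate k 0) := by
        rw [rprod_addLast, he, hEval_append, hEval_replicate]
      have hpinfix : p <:+: p ++ List.replicate k 1 := ⟨[], List.replicate k 1, by simp⟩
      have hNicep : Nice m n p :=
        ⟨fun h2 => hnR ([2,3],[]) (by simp [bsRules]) (h2.trans hpinfix),
         fun h2 => hnR ([3,2],[]) (by simp [bsRules]) (h2.trans hpinfix),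
         fun h2 => hnR (List.replicate n 0 ++ [2], 2 :: List.replicate m 0)
           (by simp [bsRules]) (h2.trans hpinfix),
         fun h2 => hnR (List.replicate m 0 ++ [3], 3 :: List.replicate n 0)
           (by simp [bsRules]) (h2.trans hpinfix)⟩
      have hvp := valid_of_nice m n (parse p).2 (parse p).1
        (by rw [parse_wordOf p hp]; exact hNicep)
      have heq : rprod m n hm' hn' (parse p).1 (parse p).2
          = rprod m n hm' hn' (addLast k c l).1 (addLast k c l).2 := by
        rw [← hEval_wordOf, parse_wordOf p hp, ← hH]
        exact her.symm
      obtain ⟨hc, hl⟩ := rprod_inj m n hm' hn' (parse p).2 (parse p).1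
        (addLast k c l).2 (addLast k c l).1 hvp hvr heq
      have hends : endsA (parse p).1 (parse p).2 := by
        rw [hc, hl]
        exact endsA_addLast k c hk l
      have hlast := getLast_wordOf (parse p).2 (parse p).1 hends
      rw [parse_wordOf p hp] at hlast
      rcases p.eq_nil_or_concat' with rfl | ⟨p', b, rfl⟩
      · simp at hlast
      · rw [List.getLast?_concat] at hlast
        have hb : b = 0 := by simpa using hlast
        subst hb
        refine hnR ([0,1],[]) (by simp [bsRules]) ?_
        obtain ⟨k', rfl⟩ := Nat.exists_eq_succ_of_ne_zero hk.ne'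
        refine ⟨p', List.replicate k' 1, ?_⟩
        rw [List.replicate_succ]
        simp
    · intro hno
      exact absurd (List.mem_append_right _ (List.mem_replicate.mpr ⟨hk.ne', rfl⟩)) hno
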